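/- Define U(t) = (2/15)·(t³ + (√(1−t) − 3)·t² + (3 − 2√(1−t))·t + √(1−t) + 1) for t ∈ [0,1]. Then U(0) = U(1) = 4/15, U attains its maximum over [0,1] at t = 11/36 (i.e. U(t) ≤ U(11/36) for all t ∈ [0,1]), and U(11/36) > 4/15. -/
import Mathlib


/-- In the two-firm example with γ = 3 and α = 4/10, the buyer's utility
`U(t) = (2/15)·(t³ + (√(1−t) − 3)·t² + (3 − 2√(1−t))·t + √(1−t) + 1)` on `[0,1]`
satisfies `U(0) = U(1) = 4/15`, is maximized at `t = 11/36`, and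
`U(11/36) > 4/15`. -/
theorem stmt_3 (U : ℝ → ℝ)
    (hU : ∀ t, U t = (2 / 15) * (t ^ 3 + (Real.sqrt (1 - t) - 3) * t ^ 2
        + (3 - 2 * Real.sqrt (1 - t)) * t + Real.sqrt (1 - t) + 1)) :
    U 0 = 4 / 15 ∧ U 1 = 4 / 15 ∧
      (∀ t ∈ Set.Icc (0:ℝ) 1, U t ≤ U (11 / 36)) ∧ 4 / 15 < U (11 / 36) := by
  have h56 : Real.sqrt (1 - 11 / 36) = 5 / 6 := by
    rw [show (1 - 11/36 : ℝ) = (5/6)^2 by norm_num, Real.sqrt_sq (by norm_num)]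
  have hUmax : U (11 / 36) = (2/15) * (3125/46656 + 2) := by
    rw [hU, h56]; norm_num
  refine ⟨?_, ?_, ?_, ?_⟩
  · rw [hU]; norm_num
  · rw [hU]; norm_num
  · intro t ht
    obtain ⟨ht0, ht1⟩ := ht
    set s := Real.sqrt (1 - t) with hs
    have hs0 : 0 ≤ s := Real.sqrt_nonneg _
    have hs2 : s ^ 2 = 1 - t := Real.sq_sqrt (by linarith)
    have htval : t = 1 - s ^ 2 := by linarith
    rw [hU, hUmax, htval]
    rw [show (1 - (1 - s^2) : ℝ) = s^2 by ring, Real.sqrt_sq hs0]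
    have key : s ^ 5 - s ^ 6 ≤ 3125/46656 := by
      nlinarith [sq_nonneg (s - 5/6), sq_nonneg (s^2 * (6*s - 5)),
        sq_nonneg (s * (6*s - 5)), sq_nonneg s, sq_nonneg (s^2 - 5/6*s)]
    nlinarith [key]
  · rw [hUmax]; norm_num
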